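/- For every x ∈ [0,1], one has e^x / (1+x)^(1+x) ≤ e^{−x²/10}. -/

import Mathlib

theorem exp_div_pow_le {x : ℝ} (hx : x ∈ Set.Icc (0 : ℝ) 1) :
    Real.exp x / (1 + x) ^ (1 + x) ≤ Real.exp (-(x ^ 2) / 10) := by
  obtain ⟨h0, h1⟩ := hx
  have h1x : (0 : ℝ) < 1 + x := by linarith
  obtain ⟨t, ht⟩ : ∃ t : ℝ, t = Real.sqrt (1 + x) := ⟨_, rfl⟩
  have ht2 : t ^ 2 = 1 + x := by rw [ht]; exact Real.sq_sqrt h1x.le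
  have ht0 : 0 < t := by rw [ht]; exact Real.sqrt_pos.mpr h1x
  have ht1 : 1 ≤ t := by nlinarith [ht0]
  have htub : t ^ 2 ≤ 2 := by nlinarith
  -- log t ≥ 1 - 1/t
  have hlogt : 1 - 1 / t ≤ Real.log t := by
    have h := Real.log_le_sub_one_of_pos (x := 1 / t) (by positivity)
    rw [Real.log_div one_ne_zero (ne_of_gt ht0), Real.log_one] at h
    have : 0 - Real.log t ≤ 1 / t - 1 := h
    linarith
  have hlog : 2 - 2 / t ≤ Real.log (1 + x) := by
    have : Real.log (1 + x) = 2 * Real.log t := by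
      rw [← ht2, Real.log_pow]; push_cast; ring
    have e : 2 - 2 / t = 2 * (1 - 1 / t) := by ring
    rw [this, e]
    exact mul_le_mul_of_nonneg_left hlogt (by norm_num)
  -- key inequality
  have key : x ≤ -(x ^ 2) / 10 + (1 + x) * Real.log (1 + x) := by
    have h2 : (1 + x) * (2 - 2 / t) ≤ (1 + x) * Real.log (1 + x) := by
      apply mul_le_mul_of_nonneg_left hlog h1x.le
    have h3 : (1 + x) * (2 - 2 / t) = 2 * t ^ 2 - 2 * t := by
      rw [← ht2]; field_simp
    have h4 : x + x ^ 2 / 10 ≤ 2 * t ^ 2 - 2 * t := by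
      nlinarith [sq_nonneg (t - 1), sq_nonneg (t ^ 2 - 1), mul_nonneg (sq_nonneg (t - 1)) ht0.le]
    nlinarith
  have hpow : (1 + x) ^ (1 + x) = Real.exp ((1 + x) * Real.log (1 + x)) := by
    rw [Real.rpow_def_of_pos h1x, mul_comm]
  rw [hpow, div_le_iff₀ (Real.exp_pos _), ← Real.exp_add, Real.exp_le_exp]
  linarith
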